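/- Let M ≥ 1 and let P = diag(λ_1, …, λ_M) ∈ ℂ^{M×M} be a diagonal matrix with |λ_i| = 1 for all i. If no value occurs among λ_1, …, λ_M more than ⌊M/2⌋ times, then there exists a matrix A ∈ ℂ^{M×M} such that AP − PA is invertible. -/

import Mathlib

/-- Let `M ≥ 1` and let `P = diag(l 1, …, l M)` be a diagonal complex
matrix with `|l i| = 1` for all `i`. If no value occurs among the diagonal entries more
than `⌊M/2⌋` times, then there exists a matrix `A` with `A*P - P*A` invertible. -/
theorem exists_commutator_invertible_of_diagonal_multiplicity_le
    (M : ℕ) (hM : 1 ≤ M) (l : Fin M → ℂ)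
    (hl : ∀ i, ‖l i‖ = 1)
    (hmult : ∀ c : ℂ, (Finset.univ.filter fun i => l i = c).card ≤ M / 2) :
    ∃ A : Matrix (Fin M) (Fin M) ℂ,
      IsUnit (A * Matrix.diagonal l - Matrix.diagonal l * A) := by
  classical
  -- target sets for Hall's theorem: indices whose value differs from `l i`
  set t : Fin M → Finset (Fin M) := fun i => Finset.univ.filter fun j => l j ≠ l i with ht
  have hall : ∀ s : Finset (Fin M), s.card ≤ (s.biUnion t).card := by
    intro s
    rcases s.eq_empty_or_nonempty with rfl | ⟨i₀, hi₀⟩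
    · simp
    by_cases hconst : ∀ i ∈ s, l i = l i₀
    · have hsub : s ⊆ Finset.univ.filter fun i => l i = l i₀ := by
        intro i hi; simp [hconst i hi]
      have h1 : s.card ≤ M / 2 := le_trans (Finset.card_le_card hsub) (hmult (l i₀))
      have h2 : t i₀ ⊆ s.biUnion t := Finset.subset_biUnion_of_mem t hi₀
      have hcompl : (Finset.univ.filter fun i => l i = l i₀).card + (t i₀).card = M := by
        have := Finset.card_filter_add_card_filter_not
          (s := (Finset.univ : Finset (Fin M))) (p := fun i => l i = l i₀)
        simpa [ht, Ne] using this
      have h3 : M / 2 ≤ (t i₀).card := by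
        have := hmult (l i₀); omega
      exact le_trans h1 (le_trans h3 (Finset.card_le_card h2))
    · push_neg at hconst
      obtain ⟨i₁, hi₁, hne⟩ := hconst
      have : s.biUnion t = Finset.univ := by
        apply Finset.eq_univ_of_forall
        intro j
        rw [Finset.mem_biUnion]
        by_cases hj : l j = l i₀
        · exact ⟨i₁, hi₁, by
            simp only [ht, Finset.mem_filter, Finset.mem_univ, true_and, hj]
            exact Ne.symm hne⟩
        · exact ⟨i₀, hi₀, by simp [ht, hj]⟩
      rw [this]
      simpa using Finset.card_le_card (Finset.subset_univ s)
  obtain ⟨f, hfinj, hf⟩ := (Finset.all_card_le_biUnion_card_iff_exists_injective t).mp hall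
  have hfne : ∀ i, l (f i) ≠ l i := by
    intro i; have := hf i; simp [ht] at this; exact this
  -- turn f into a permutation
  let σ : Equiv.Perm (Fin M) := Equiv.ofBijective f
    ((Finite.injective_iff_bijective).mp hfinj)
  have hσ : ∀ i, σ i = f i := fun i => rfl
  refine ⟨Matrix.of fun i j => if j = σ i then (l j - l i)⁻¹ else 0, ?_⟩
  have key : (Matrix.of fun i j => if j = σ i then (l j - l i)⁻¹ else 0) * Matrix.diagonal l
      - Matrix.diagonal l * (Matrix.of fun i j => if j = σ i then (l j - l i)⁻¹ else 0)
      = σ.permMatrix ℂ := by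
    ext i j
    simp only [Matrix.sub_apply, Matrix.mul_diagonal, Matrix.diagonal_mul, Matrix.of_apply,
      Equiv.Perm.permMatrix, PEquiv.toMatrix_apply, Equiv.toPEquiv_apply, Option.mem_some_iff]
    by_cases h : j = σ i
    · subst h
      have hne : l (σ i) - l i ≠ 0 := sub_ne_zero_of_ne (by rw [hσ]; exact hfne i)
      simp only [if_true, eq_self_iff_true]
      rw [mul_comm ((l (σ i) - l i)⁻¹) (l (σ i)), ← sub_mul, mul_inv_cancel₀ hne]
    · simp [h, Ne.symm h]
  rw [key, Matrix.isUnit_iff_isUnit_det, Matrix.det_permutation]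
  rcases Int.units_eq_one_or (Equiv.Perm.sign σ) with h | h <;> simp [h]
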